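/- Let X be a Banach lattice and suppose (x_n) is a sequence in X and x ∈ X such that for every ε > 0 there exists k with ‖⋁_{n=k}^m |x_n − x|‖ < ε for all m ≥ k. Then there exists a strictly increasing sequence 0 = k_0 < k_1 < k_2 < … such that the series ∑_{l=0}^∞ 2^l ⋁_{n=k_l}^{k_{l+1}−1} |x_n − x| converges in norm to some z ∈ X₊, and for every l ≥ 1 and all n ≥ k_l one has |x_n − x| ≤ z/2^l. -/

import Mathlib

open Filter

section AuxLattice

variable {X : Type*} [Lattice X] [AddCommGroup X] [AddLeftMono X] [AddRightMono X]

private lemma aux_nsmul_inf_le (a b : X) (ha : 0 ≤ a) (hab : a ⊓ b ≤ 0) (n : ℕ) :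
    n • a ⊓ b ≤ 0 := by
  induction n with
  | zero => simpa using inf_le_left.trans (le_refl (0 : X))
  | succ n ih =>
    have h1 : (n + 1) • a ⊓ b ≤ n • a + (a ⊓ b) := by
      rw [add_inf]
      refine le_inf (inf_le_left.trans ?_) ?_
      · rw [succ_nsmul]
      · exact inf_le_right.trans (le_add_of_nonneg_left (nsmul_nonneg ha n))
    have h2 : (n + 1) • a ⊓ b ≤ n • a := h1.trans (by simpa using add_le_add_left hab (n • a))
    exact (le_inf h2 inf_le_right).trans ih

private lemma aux_nsmul_nonneg_rev (u : X) (n : ℕ) (hn : 0 < n) (h : 0 ≤ n • u) : 0 ≤ u := by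
  have hpn : u⁺ ⊓ u⁻ ≤ 0 := (posPart_inf_negPart_eq_zero u).le
  have h1 : n • u⁺ ⊓ u⁻ ≤ 0 := aux_nsmul_inf_le u⁺ u⁻ (posPart_nonneg u) hpn n
  have h2 : n • u⁻ ⊓ n • u⁺ ≤ 0 :=
    aux_nsmul_inf_le u⁻ (n • u⁺) (negPart_nonneg u) (by rwa [inf_comm] at h1) n
  have hle : n • u⁻ ≤ n • u⁺ := by
    rw [← posPart_sub_negPart u, smul_sub] at h
    exact sub_nonneg.mp h
  have h3 : n • u⁻ ≤ 0 := by
    have : n • u⁻ = n • u⁻ ⊓ n • u⁺ := (inf_eq_left.mpr hle).symm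
    rw [this]; exact h2
  have h4 : u⁻ ≤ n • u⁻ := by
    have := nsmul_le_nsmul_left (negPart_nonneg u) hn
    simpa using this
  have h5 : u⁻ = 0 := le_antisymm (h4.trans h3) (negPart_nonneg u)
  exact negPart_eq_zero.mp h5

end AuxLattice

private lemma aux_inv_nat_smul_nonneg {X : Type*} [NormedAddCommGroup X] [Lattice X]
    [HasSolidNorm X] [IsOrderedAddMonoid X]
    [NormedSpace ℝ X] (m : ℕ) (hm : 0 < m) (w : X) (hw : 0 ≤ w) : 0 ≤ ((m : ℝ))⁻¹ • w := by
  apply aux_nsmul_nonneg_rev _ m hm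
  rw [← Nat.cast_smul_eq_nsmul ℝ, smul_smul,
    mul_inv_cancel₀ (by exact_mod_cast hm.ne' : (m : ℝ) ≠ 0), one_smul]
  exact hw

set_option maxHeartbeats 1000000 in
/-- In a Banach lattice, if for every `ε > 0` there is `k` with
`‖⋁_{n=k}^m |x n − x₀|‖ < ε` for all `m ≥ k`, then there is a strictly increasing
sequence `0 = k 0 < k 1 < …` such that the series
`∑_l 2^l ⋁_{n = k l}^{k (l+1) - 1} |x n − x₀|` converges in norm to some `z ≥ 0`, and
for every `l ≥ 1` and `n ≥ k l`, `|x n − x₀| ≤ z / 2^l`. -/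
theorem exists_dominating_series {X : Type*} [NormedAddCommGroup X] [Lattice X]
    [HasSolidNorm X] [IsOrderedAddMonoid X]
    [NormedSpace ℝ X] [CompleteSpace X] (x : ℕ → X) (x₀ : X)
    (h : ∀ ε : ℝ, 0 < ε → ∃ k : ℕ, ∀ m : ℕ, ∀ h : k ≤ m,
      ‖(Finset.Icc k m).sup' (Finset.nonempty_Icc.mpr h) (fun n => |x n - x₀|)‖ < ε) :
    ∃ k : ℕ → ℕ, ∃ hk : StrictMono k, k 0 = 0 ∧
      ∃ z : X, 0 ≤ z ∧
        Tendsto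
          (fun L : ℕ => ∑ l ∈ Finset.range L,
            (2 ^ l : ℝ) •
              (Finset.Ico (k l) (k (l + 1))).sup'
                (Finset.nonempty_Ico.mpr (hk (Nat.lt_succ_self l)))
                (fun n => |x n - x₀|))
          atTop (nhds z) ∧
        ∀ l : ℕ, 1 ≤ l → ∀ n : ℕ, k l ≤ n → |x n - x₀| ≤ ((2 : ℝ) ^ l)⁻¹ • z := by
  classical
  have hKex : ∀ l : ℕ, ∃ kk : ℕ, ∀ m : ℕ, ∀ h : kk ≤ m,
      ‖(Finset.Icc kk m).sup' (Finset.nonempty_Icc.mpr h) (fun n => |x n - x₀|)‖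
        < (1/4 : ℝ) ^ l := fun l => h ((1/4) ^ l) (by positivity)
  choose K hKspec using hKex
  -- define k
  let k : ℕ → ℕ := fun l => Nat.rec 0 (fun l kl => max (K (l + 1)) kl + 1) l
  have hkstep : ∀ l, k (l + 1) = max (K (l + 1)) (k l) + 1 := fun l => rfl
  have hkmono : StrictMono k := strictMono_nat_of_lt_succ fun l => by
    rw [hkstep]; exact Nat.lt_succ_of_le (le_max_right _ _)
  have hkK : ∀ l : ℕ, 1 ≤ l → K l ≤ k l := by
    intro l hl
    obtain ⟨m, rfl⟩ := Nat.exists_eq_add_of_le hl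
    rw [show 1 + m = m + 1 by ring, hkstep]
    exact (le_max_left _ _).trans (Nat.le_succ _)
  -- the sup terms
  set s : ℕ → X := fun l =>
    (Finset.Ico (k l) (k (l + 1))).sup'
      (Finset.nonempty_Ico.mpr (hkmono (Nat.lt_succ_self l))) (fun n => |x n - x₀|) with hs
  have hs_nonneg : ∀ l, 0 ≤ s l := by
    intro l
    refine le_trans (abs_nonneg (x (k l) - x₀)) ?_
    exact Finset.le_sup' (fun n => |x n - x₀|)
      (Finset.mem_Ico.mpr ⟨le_refl _, hkmono (Nat.lt_succ_self l)⟩)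
  -- norm bound
  have hs_norm : ∀ l : ℕ, 1 ≤ l → ‖s l‖ ≤ (1/4 : ℝ) ^ l := by
    intro l hl
    have hlt : k l < k (l + 1) := hkmono (Nat.lt_succ_self l)
    have hIcc : Finset.Ico (k l) (k (l + 1)) = Finset.Icc (k l) (k (l + 1) - 1) := by
      rw [← Finset.Ico_add_one_right_eq_Icc]
      have h9 : (k (l + 1) - 1).succ = k (l + 1) := by omega
      rw [Nat.succ_eq_add_one] at h9; rw [h9]
    have hKm : K l ≤ k (l + 1) - 1 := (hkK l hl).trans (Nat.le_sub_one_of_lt hlt)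
    have hsub : Finset.Icc (k l) (k (l + 1) - 1) ⊆ Finset.Icc (K l) (k (l + 1) - 1) :=
      Finset.Icc_subset_Icc_left (hkK l hl)
    have hne : (Finset.Icc (k l) (k (l + 1) - 1)).Nonempty :=
      Finset.nonempty_Icc.mpr (Nat.le_sub_one_of_lt hlt)
    have hle : s l ≤ (Finset.Icc (K l) (k (l + 1) - 1)).sup'
        (Finset.nonempty_Icc.mpr hKm) (fun n => |x n - x₀|) := by
      rw [hs]
      simp only
      rw [show ((Finset.Ico (k l) (k (l + 1))).sup'
          (Finset.nonempty_Ico.mpr (hkmono (Nat.lt_succ_self l))) (fun n => |x n - x₀|)) =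
          ((Finset.Icc (k l) (k (l + 1) - 1)).sup' hne (fun n => |x n - x₀|)) by
        congr 1 <;> simp [hIcc]]
      exact Finset.sup'_mono _ hsub hne
    have hTnn : 0 ≤ (Finset.Icc (K l) (k (l + 1) - 1)).sup'
        (Finset.nonempty_Icc.mpr hKm) (fun n => |x n - x₀|) := (hs_nonneg l).trans hle
    have hnorm1 : ‖s l‖ ≤ ‖(Finset.Icc (K l) (k (l + 1) - 1)).sup'
        (Finset.nonempty_Icc.mpr hKm) (fun n => |x n - x₀|)‖ := by
      apply norm_le_norm_of_abs_le_abs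
      rw [abs_of_nonneg (hs_nonneg l), abs_of_nonneg hTnn]
      exact hle
    exact hnorm1.trans (hKspec l (k (l + 1) - 1) hKm).le
  -- the series
  set f : ℕ → X := fun l => (2 : ℝ) ^ l • s l with hf
  have hf_nonneg : ∀ l, 0 ≤ f l := by
    intro l
    have : (2 : ℝ) ^ l = ((2 ^ l : ℕ) : ℝ) := by push_cast; ring
    rw [hf]; simp only
    rw [this, Nat.cast_smul_eq_nsmul]
    exact nsmul_nonneg (hs_nonneg l) _
  have hf_summable : Summable f := by
    apply Summable.of_norm
    rw [← summable_nat_add_iff 1]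
    refine Summable.of_nonneg_of_le (fun n => norm_nonneg _) (fun n => ?_)
      ((summable_nat_add_iff 1).mpr (summable_geometric_of_lt_one (by norm_num) (by norm_num : (1/2:ℝ) < 1)))
    have h1 : ‖f (n + 1)‖ = (2 : ℝ) ^ (n + 1) * ‖s (n + 1)‖ := by
      rw [hf]; simp only [norm_smul]
      rw [Real.norm_eq_abs, abs_of_nonneg (by positivity)]
    rw [h1]
    calc (2 : ℝ) ^ (n + 1) * ‖s (n + 1)‖ ≤ (2 : ℝ) ^ (n + 1) * (1/4) ^ (n + 1) := by
          apply mul_le_mul_of_nonneg_left (hs_norm (n + 1) (Nat.le_add_left _ _)) (by positivity)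
      _ = (1/2 : ℝ) ^ (n + 1) := by
          rw [← mul_pow]; norm_num
  set z : X := ∑' l, f l with hz
  have htend : Tendsto (fun L : ℕ => ∑ l ∈ Finset.range L, f l) atTop (nhds z) :=
    hf_summable.hasSum.tendsto_sum_nat
  have hz_nonneg : 0 ≤ z := tsum_nonneg hf_nonneg
  have hfz : ∀ j, f j ≤ z := fun j => Summable.le_tsum hf_summable j (fun i _ => hf_nonneg i)
  refine ⟨k, hkmono, rfl, z, hz_nonneg, htend, ?_⟩
  intro l hl n hn
  -- find j with k j ≤ n < k (j+1) and l ≤ j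
  have hQne : ∃ i, n < k i := ⟨n + 1, lt_of_lt_of_le (Nat.lt_succ_self n) (hkmono.le_apply)⟩
  set j' := @Nat.find (fun i => n < k i) (fun i => Nat.decLt _ _) hQne with hj'
  have hj'pos : 0 < j' := by
    rcases Nat.eq_zero_or_pos j' with h0 | h0
    · exfalso
      have := @Nat.find_spec (fun i => n < k i) (fun i => Nat.decLt _ _) hQne
      rw [← hj', h0] at this
      have h00 : k 0 = 0 := rfl
      omega
    · exact h0
  set j := j' - 1 with hjdef
  have hkj : k j ≤ n := by
    have := @Nat.find_min (fun i => n < k i) (fun i => Nat.decLt _ _) hQne j (by omega)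
    omega
  have hkj1 : n < k (j + 1) := by
    have := @Nat.find_spec (fun i => n < k i) (fun i => Nat.decLt _ _) hQne
    rw [← hj'] at this
    rwa [show j + 1 = j' by omega]
  have hlj : l ≤ j := by
    by_contra hc
    push_neg at hc
    have : k (j + 1) ≤ k l := hkmono.le_iff_le.mpr (show j + 1 ≤ l by omega)
    omega
  -- the chain
  have hxs : |x n - x₀| ≤ s j := by
    simp only [hs]
    exact Finset.le_sup' (fun n => |x n - x₀|) (Finset.mem_Ico.mpr ⟨hkj, hkj1⟩)
  have hchain : (2 ^ l : ℕ) • |x n - x₀| ≤ z := by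
    calc (2 ^ l : ℕ) • |x n - x₀| ≤ (2 ^ l : ℕ) • s j := nsmul_le_nsmul_right hxs _
      _ ≤ (2 ^ j : ℕ) • s j := nsmul_le_nsmul_left (hs_nonneg j)
          (Nat.pow_le_pow_right (by norm_num) hlj)
      _ = f j := by
          rw [hf]; simp only
          rw [show (2 : ℝ) ^ j = ((2 ^ j : ℕ) : ℝ) by push_cast; ring,
            Nat.cast_smul_eq_nsmul]
      _ ≤ z := hfz j
  have hw : 0 ≤ z - (2 ^ l : ℕ) • |x n - x₀| := sub_nonneg.mpr hchain
  have hinv : 0 ≤ ((2 ^ l : ℕ) : ℝ)⁻¹ • (z - (2 ^ l : ℕ) • |x n - x₀|) :=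
    aux_inv_nat_smul_nonneg _ (by positivity) _ hw
  have hexp : ((2 ^ l : ℕ) : ℝ)⁻¹ • (z - (2 ^ l : ℕ) • |x n - x₀|)
      = ((2 : ℝ) ^ l)⁻¹ • z - |x n - x₀| := by
    rw [smul_sub, ← Nat.cast_smul_eq_nsmul ℝ (2 ^ l) (|x n - x₀|), smul_smul,
      inv_mul_cancel₀ (by positivity : ((2 ^ l : ℕ) : ℝ) ≠ 0), one_smul]
    congr 2
    push_cast; ring
  rw [hexp] at hinv
  exact sub_nonneg.mp hinv
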